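/- arXiv:2109.05641 — 4 statements merged into one kernel-verified Lean document; each statement's English description precedes it below -/
import Mathlib

section
/- Let C ≥ 2 and d ≥ 1 be integers, h ∈ [0,1], and fix a class c ∈ Fin C. Let V_1,…,V_d and U_1,…,U_d be 2d mutually independent Fin C-valued random variables, each with law ν_c. Let W^V and W^U be the aggregated label vectors of (V_k) and (U_k), both with anchor class c. Then E[ ∑_{a ∈ Fin C} W^V_a · W^U_a ] = ((h·d+1)/(d+1))² + ((1−h)·d)² / ((C−1)(d+1)²). -/
open scoped BigOperators
open MeasureTheory ProbabilityTheory

/-- `Y` has law `ν_c`: it takes the value `c` with probability `h` and each of the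
other `C - 1` values with probability `(1 - h)/(C - 1)`. -/
def HasLawNu {Ω : Type*} [MeasurableSpace Ω] {C : ℕ} (P : Measure Ω)
    (h : ℝ) (c : Fin C) (Y : Ω → Fin C) : Prop :=
  Measurable Y ∧
    ∀ a : Fin C, P (Y ⁻¹' {a}) =
      ENNReal.ofReal (if a = c then h else (1 - h) / ((C : ℝ) - 1))

/-- The aggregated label vector of the family `X` with anchor class `c`:
`W_a = (𝟙[a = c] + #{k : X_k = a})/(d+1)`. -/
noncomputable def aggW {Ω : Type*} {C : ℕ} (d : ℕ) (c : Fin C)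
    (X : Fin d → Ω → Fin C) (ω : Ω) (a : Fin C) : ℝ :=
  ((if a = c then (1 : ℝ) else 0) +
      (Finset.univ.filter fun k => X k ω = a).card) / ((d : ℝ) + 1)

lemma ind_eq_indicator {Ω : Type*} {C : ℕ} (Y : Ω → Fin C) (a : Fin C) :
    (fun ω => if Y ω = a then (1 : ℝ) else 0) = (Y ⁻¹' ({a} : Set (Fin C))).indicator (fun _ => (1 : ℝ)) := by
  funext ω
  by_cases h : Y ω = a <;> simp [Set.indicator_apply, h]

lemma ind_mul_eq_indicator {Ω : Type*} {C : ℕ} (Y Z : Ω → Fin C) (a : Fin C) :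
    (fun ω => (if Y ω = a then (1 : ℝ) else 0) * (if Z ω = a then (1 : ℝ) else 0)) =
      (Y ⁻¹' ({a} : Set (Fin C)) ∩ Z ⁻¹' ({a} : Set (Fin C))).indicator (fun _ => (1 : ℝ)) := by
  funext ω
  by_cases h1 : Y ω = a <;> by_cases h2 : Z ω = a <;>
    simp [Set.indicator_apply, h1, h2]

theorem expectation_similarity_same_class
    {Ω : Type*} [MeasurableSpace Ω] (P : Measure Ω) [IsProbabilityMeasure P]
    (C d : ℕ) (hC : 2 ≤ C) (hd : 1 ≤ d) (h : ℝ) (h0 : 0 ≤ h) (h1 : h ≤ 1)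
    (c : Fin C) (V U : Fin d → Ω → Fin C)
    (hlawV : ∀ k, HasLawNu P h c (V k)) (hlawU : ∀ k, HasLawNu P h c (U k))
    (hindep : iIndepFun (Sum.elim V U) P) :
    ∫ ω, ∑ a, aggW d c V ω a * aggW d c U ω a ∂P =
      ((h * d + 1) / ((d : ℝ) + 1)) ^ 2 +
        ((1 - h) * d) ^ 2 / (((C : ℝ) - 1) * ((d : ℝ) + 1) ^ 2) := by
  -- the single-class probability
  set pa : Fin C → ℝ := fun a => if a = c then h else (1 - h) / ((C : ℝ) - 1) with hpa_def
  have hC1 : (0 : ℝ) < (C : ℝ) - 1 := by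
    have : (2 : ℝ) ≤ (C : ℝ) := by exact_mod_cast hC
    linarith
  have hpa0 : ∀ a, 0 ≤ pa a := by
    intro a
    simp only [hpa_def]
    split
    · exact h0
    · exact div_nonneg (by linarith) hC1.le
  have hd1 : (0 : ℝ) < (d : ℝ) + 1 := by positivity
  have hmV : ∀ j, Measurable (V j) := fun j => (hlawV j).1
  have hmU : ∀ j, Measurable (U j) := fun j => (hlawU j).1
  -- integrability and integrals of indicators
  have hintV : ∀ (a : Fin C) (j : Fin d),
      Integrable (fun ω => if V j ω = a then (1 : ℝ) else 0) P := by
    intro a j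
    rw [ind_eq_indicator]
    exact (integrable_const 1).indicator (hmV j (measurableSet_singleton a))
  have hintU : ∀ (a : Fin C) (j : Fin d),
      Integrable (fun ω => if U j ω = a then (1 : ℝ) else 0) P := by
    intro a j
    rw [ind_eq_indicator]
    exact (integrable_const 1).indicator (hmU j (measurableSet_singleton a))
  have hEV : ∀ (a : Fin C) (j : Fin d),
      ∫ ω, (if V j ω = a then (1 : ℝ) else 0) ∂P = pa a := by
    intro a j
    rw [ind_eq_indicator, integral_indicator_const _ (hmV j (measurableSet_singleton a)),
      measureReal_def, (hlawV j).2 a]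
    simp [ENNReal.toReal_ofReal (hpa0 a), hpa_def]
    exact hpa0 a
  have hEU : ∀ (a : Fin C) (j : Fin d),
      ∫ ω, (if U j ω = a then (1 : ℝ) else 0) ∂P = pa a := by
    intro a j
    rw [ind_eq_indicator, integral_indicator_const _ (hmU j (measurableSet_singleton a)),
      measureReal_def, (hlawU j).2 a]
    simp [ENNReal.toReal_ofReal (hpa0 a), hpa_def]
    exact hpa0 a
  -- products
  have hintVU : ∀ (a : Fin C) (j k : Fin d),
      Integrable (fun ω => (if V j ω = a then (1 : ℝ) else 0) *
        (if U k ω = a then (1 : ℝ) else 0)) P := by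
    intro a j k
    rw [ind_mul_eq_indicator]
    exact (integrable_const 1).indicator
      ((hmV j (measurableSet_singleton a)).inter (hmU k (measurableSet_singleton a)))
  have hEVU : ∀ (a : Fin C) (j k : Fin d),
      ∫ ω, (if V j ω = a then (1 : ℝ) else 0) * (if U k ω = a then (1 : ℝ) else 0) ∂P
        = pa a * pa a := by
    intro a j k
    have hind : IndepFun (V j) (U k) P := by
      have := hindep.indepFun (show (Sum.inl j : Fin d ⊕ Fin d) ≠ Sum.inr k by simp)
      simpa using this
    have hmeas := hind.measure_inter_preimage_eq_mul {a} {a}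
      (measurableSet_singleton a) (measurableSet_singleton a)
    rw [ind_mul_eq_indicator, integral_indicator_const _
      ((hmV j (measurableSet_singleton a)).inter (hmU k (measurableSet_singleton a))),
      measureReal_def, hmeas, (hlawV j).2 a, (hlawU k).2 a]
    have hrfl : ENNReal.ofReal (if a = c then h else (1 - h) / ((C : ℝ) - 1)) =
        ENNReal.ofReal (pa a) := rfl
    rw [hrfl, ← ENNReal.ofReal_mul (hpa0 a),
      ENNReal.toReal_ofReal (mul_nonneg (hpa0 a) (hpa0 a))]
    simp
  -- rewrite aggW in terms of indicator sums
  have hagg : ∀ (X : Fin d → Ω → Fin C) (ω : Ω) (a : Fin C),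
      aggW d c X ω a =
        ((if a = c then (1 : ℝ) else 0) + ∑ j, if X j ω = a then (1 : ℝ) else 0)
          / ((d : ℝ) + 1) := by
    intro X ω a
    unfold aggW
    congr 2
    rw [Finset.card_filter]
    push_cast
    rfl
  -- the per-class expectation
  have key : ∀ a : Fin C,
      ∫ ω, aggW d c V ω a * aggW d c U ω a ∂P =
        (((if a = c then (1 : ℝ) else 0) + (d : ℝ) * pa a) / ((d : ℝ) + 1)) ^ 2 := by
    intro a
    set χ : ℝ := if a = c then (1 : ℝ) else 0 with hχ
    have expand : ∀ ω, aggW d c V ω a * aggW d c U ω a =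
        (χ * χ + ∑ k, χ * (if U k ω = a then (1 : ℝ) else 0)
          + ∑ j, (if V j ω = a then (1 : ℝ) else 0) * χ
          + ∑ j, ∑ k, (if V j ω = a then (1 : ℝ) else 0) * (if U k ω = a then (1 : ℝ) else 0))
          / ((d : ℝ) + 1) ^ 2 := by
      intro ω
      rw [hagg, hagg, div_mul_div_comm, ← sq, add_mul, mul_add, mul_add,
        Finset.mul_sum, Finset.sum_mul, Finset.sum_mul_sum]
      ring
    simp_rw [expand]
    rw [integral_div, integral_add, integral_add, integral_add, integral_const,
      integral_finset_sum _ (fun k _ => (hintU a k).const_mul χ),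
      integral_finset_sum _ (fun j _ => (hintV a j).mul_const χ),
      integral_finset_sum _ (fun j _ =>
        integrable_finset_sum _ (fun k _ => hintVU a j k))]
    · simp_rw [integral_const_mul, integral_mul_const, hEU, hEV,
        integral_finset_sum _ (fun k (_ : k ∈ Finset.univ) => hintVU a _ k), hEVU]
      simp only [Finset.sum_const, Finset.card_univ, Fintype.card_fin, nsmul_eq_mul,
        measure_univ, probReal_univ, ENNReal.toReal_one, smul_eq_mul, one_mul]
      have hχχ : χ * χ = χ := by by_cases hac : a = c <;> simp [hχ, hac]
      rw [hχχ]
      have h2 : χ ^ 2 = χ := by by_cases hac : a = c <;> simp [hχ, hac]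
      field_simp
      linear_combination -h2
    · exact integrable_const _
    · exact integrable_finset_sum _ (fun k _ => (hintU a k).const_mul χ)
    · exact (integrable_const _).add (integrable_finset_sum _ (fun k _ => (hintU a k).const_mul χ))
    · exact integrable_finset_sum _ (fun j _ => (hintV a j).mul_const χ)
    · exact ((integrable_const _).add
        (integrable_finset_sum _ (fun k _ => (hintU a k).const_mul χ))).add
        (integrable_finset_sum _ (fun j _ => (hintV a j).mul_const χ))
    · exact integrable_finset_sum _ (fun j _ =>
        integrable_finset_sum _ (fun k _ => hintVU a j k))
  -- integrability of each summand
  have hint_a : ∀ a : Fin C,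
      Integrable (fun ω => aggW d c V ω a * aggW d c U ω a) P := by
    intro a
    set χ : ℝ := if a = c then (1 : ℝ) else 0 with hχ
    have expand : (fun ω => aggW d c V ω a * aggW d c U ω a) = fun ω =>
        (χ * χ + ∑ k, χ * (if U k ω = a then (1 : ℝ) else 0)
          + ∑ j, (if V j ω = a then (1 : ℝ) else 0) * χ
          + ∑ j, ∑ k, (if V j ω = a then (1 : ℝ) else 0) * (if U k ω = a then (1 : ℝ) else 0))
          / ((d : ℝ) + 1) ^ 2 := by
      funext ω
      rw [hagg, hagg, div_mul_div_comm, ← sq, add_mul, mul_add, mul_add,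
        Finset.mul_sum, Finset.sum_mul, Finset.sum_mul_sum]
      ring
    rw [expand]
    exact ((((integrable_const _).add
      (integrable_finset_sum _ (fun k _ => (hintU a k).const_mul χ))).add
      (integrable_finset_sum _ (fun j _ => (hintV a j).mul_const χ))).add
      (integrable_finset_sum _ (fun j _ =>
        integrable_finset_sum _ (fun k _ => hintVU a j k)))).div_const _
  rw [integral_finset_sum _ (fun a _ => hint_a a)]
  simp_rw [key]
  -- evaluate the sum over classes
  have hcard : (Finset.univ : Finset (Fin C)).card = C := by simp
  have hsum : ∀ a : Fin C,
      (((if a = c then (1 : ℝ) else 0) + (d : ℝ) * pa a) / ((d : ℝ) + 1)) ^ 2 =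
        ((d : ℝ) * ((1 - h) / ((C : ℝ) - 1)) / ((d : ℝ) + 1)) ^ 2 +
          (if a = c then ((1 + (d : ℝ) * h) / ((d : ℝ) + 1)) ^ 2 -
            ((d : ℝ) * ((1 - h) / ((C : ℝ) - 1)) / ((d : ℝ) + 1)) ^ 2 else 0) := by
    intro a
    by_cases hac : a = c <;> simp [hpa_def, hac]
  simp_rw [hsum]
  rw [Finset.sum_add_distrib, Finset.sum_const, Finset.sum_ite_eq' Finset.univ c]
  simp only [Finset.mem_univ, if_true, hcard, nsmul_eq_mul]
  have hCne : ((C : ℝ) - 1) ≠ 0 := ne_of_gt hC1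
  have hdne : ((d : ℝ) + 1) ≠ 0 := ne_of_gt hd1
  field_simp
  ring
end

section
/- (Theorem 1.) Let C ≥ 2 and d ≥ 1 be integers, h ∈ [0,1], and fix two distinct classes c, c' ∈ Fin C. Let V_1,…,V_d, U_1,…,U_d, U'_1,…,U'_d be 3d mutually independent Fin C-valued random variables, where each V_k and each U_k has law ν_c and each U'_k has law ν_{c'}. Let W^V, W^U be the aggregated label vectors of (V_k), (U_k) with anchor class c, and W^{U'} the aggregated label vector of (U'_k) with anchor class c'. Then E[ ∑_{a ∈ Fin C} W^V_a · W^U_a ] − E[ ∑_{a ∈ Fin C} W^V_a · W^{U'}_a ] = ( ((C−1)(h·d+1) − (1−h)·d) / ((C−1)(d+1)) )². -/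
open scoped BigOperators
open MeasureTheory ProbabilityTheory

section Aux
variable {Ω : Type*} [MeasurableSpace Ω] {C : ℕ}

lemma aggW_eq_sum (d : ℕ) (c : Fin C) (X : Fin d → Ω → Fin C) (ω : Ω) (a : Fin C) :
    aggW d c X ω a =
      ((if a = c then (1 : ℝ) else 0) + ∑ k, (if X k ω = a then (1 : ℝ) else 0)) /
        ((d : ℝ) + 1) := by
  rw [aggW, Finset.sum_boole]

lemma measurable_aggW {d : ℕ} {c : Fin C} {X : Fin d → Ω → Fin C}
    (hX : ∀ k, Measurable (X k)) (a : Fin C) :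
    Measurable (fun ω => aggW d c X ω a) := by
  simp only [aggW_eq_sum]
  apply Measurable.div_const
  apply Measurable.const_add
  apply Finset.measurable_sum
  intro k _
  exact Measurable.ite (hX k (measurableSet_singleton a)) measurable_const measurable_const

lemma aggW_nonneg {d : ℕ} {c : Fin C} {X : Fin d → Ω → Fin C} (ω : Ω) (a : Fin C) :
    0 ≤ aggW d c X ω a := by
  apply div_nonneg _ (by positivity)
  have : (0:ℝ) ≤ (if a = c then (1:ℝ) else 0) := by split <;> norm_num
  positivity

lemma aggW_le_one {d : ℕ} {c : Fin C} {X : Fin d → Ω → Fin C} (ω : Ω) (a : Fin C) :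
    aggW d c X ω a ≤ 1 := by
  rw [aggW, div_le_one (by positivity)]
  have h1 : (if a = c then (1:ℝ) else 0) ≤ 1 := by split <;> norm_num
  have h2 : ((Finset.univ.filter fun k => X k ω = a).card : ℝ) ≤ d := by
    exact_mod_cast (Finset.card_filter_le _ _).trans (by simp)
  linarith
end Aux

example : True := trivial

section Aux2
variable {Ω : Type*} [MeasurableSpace Ω] {C : ℕ}
set_option linter.unusedSectionVars false

lemma integrable_mul_aggW {d : ℕ} {c1 c2 : Fin C} {X Y : Fin d → Ω → Fin C}
    (P : Measure Ω) [IsProbabilityMeasure P]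
    (hX : ∀ k, Measurable (X k)) (hY : ∀ k, Measurable (Y k)) (a b : Fin C) :
    Integrable (fun ω => aggW d c1 X ω a * aggW d c2 Y ω b) P := by
  refine ⟨((measurable_aggW hX a).mul (measurable_aggW hY b)).aestronglyMeasurable,
    MeasureTheory.HasFiniteIntegral.of_bounded (C := 1) (ae_of_all _ fun ω => ?_)⟩
  rw [Real.norm_eq_abs, abs_mul, abs_of_nonneg (aggW_nonneg ω a), abs_of_nonneg (aggW_nonneg ω b)]
  exact mul_le_one₀ (aggW_le_one ω a) (aggW_nonneg ω b) (aggW_le_one ω b)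

lemma integrable_indicator_eq {Y : Ω → Fin C} (P : Measure Ω) [IsProbabilityMeasure P]
    (hY : Measurable Y) (a : Fin C) :
    Integrable (fun ω => if Y ω = a then (1:ℝ) else 0) P := by
  have : (fun ω => if Y ω = a then (1:ℝ) else 0) =
      Set.indicator (Y ⁻¹' {a}) (fun _ => (1:ℝ)) := by
    classical
    ext ω; rw [Set.indicator_apply]; simp [Set.mem_preimage]
  rw [this]
  exact (integrable_const (1:ℝ)).indicator (hY (measurableSet_singleton a))

lemma integral_indicator_eq' {Y : Ω → Fin C} (P : Measure Ω) [IsProbabilityMeasure P]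
    (hY : Measurable Y) (a : Fin C) :
    ∫ ω, (if Y ω = a then (1:ℝ) else 0) ∂P = (P (Y ⁻¹' {a})).toReal := by
  have : (fun ω => if Y ω = a then (1:ℝ) else 0) =
      Set.indicator (Y ⁻¹' {a}) (fun _ => (1:ℝ)) := by
    classical
    ext ω; rw [Set.indicator_apply]; simp [Set.mem_preimage]
  rw [this, MeasureTheory.integral_indicator_const (1:ℝ) (hY (measurableSet_singleton a)),
    smul_eq_mul, mul_one, measureReal_def]

lemma integral_aggW {d : ℕ} (P : Measure Ω) [IsProbabilityMeasure P] {h : ℝ}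
    (h0 : 0 ≤ h) (h1 : h ≤ 1) (hC : 2 ≤ C) (b : Fin C) {X : Fin d → Ω → Fin C}
    (hlaw : ∀ k, HasLawNu P h b (X k)) (a : Fin C) :
    ∫ ω, aggW d b X ω a ∂P =
      ((if a = b then (1:ℝ) else 0) +
        d * (if a = b then h else (1 - h) / ((C : ℝ) - 1))) / ((d : ℝ) + 1) := by
  have hq : 0 ≤ (1 - h) / ((C : ℝ) - 1) := by
    apply div_nonneg (by linarith)
    have : (2:ℝ) ≤ (C:ℝ) := by exact_mod_cast hC
    linarith
  simp only [aggW_eq_sum]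
  rw [integral_div]
  congr 1
  rw [integral_add (integrable_const _)
    (integrable_finset_sum _ fun k _ => integrable_indicator_eq P (hlaw k).1 a)]
  rw [integral_const, integral_finset_sum _ fun k _ => integrable_indicator_eq P (hlaw k).1 a]
  simp only [measureReal_def, measure_univ, ENNReal.toReal_one, one_smul]
  congr 1
  have : ∀ k : Fin d, ∫ ω, (if X k ω = a then (1:ℝ) else 0) ∂P =
      (if a = b then h else (1 - h) / ((C : ℝ) - 1)) := by
    intro k
    rw [integral_indicator_eq' P (hlaw k).1 a, (hlaw k).2 a, ENNReal.toReal_ofReal]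
    split <;> [exact h0; exact hq]
  simp only [this, Finset.sum_const, Finset.card_univ, Fintype.card_fin, nsmul_eq_mul]

lemma indepFun_aggW {ι : Type*} {d : ℕ} {P : Measure Ω}
    {f : ι → Ω → Fin C} (hmeas : ∀ i, Measurable (f i))
    (hindep : iIndepFun (β := fun _ => Fin C) f P)
    (φ ψ : Fin d → ι) (hdisj : ∀ k l, φ k ≠ ψ l)
    (c1 c2 a1 a2 : Fin C) :
    IndepFun (fun ω => aggW d c1 (fun k => f (φ k)) ω a1)
      (fun ω => aggW d c2 (fun k => f (ψ k)) ω a2) P := by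
  classical
  set S : Finset ι := Finset.univ.image φ with hS
  set T : Finset ι := Finset.univ.image ψ with hT
  have hST : Disjoint S T := by
    rw [Finset.disjoint_left]
    rintro i hi hi'
    simp only [hS, hT, Finset.mem_image, Finset.mem_univ, true_and] at hi hi'
    obtain ⟨k, rfl⟩ := hi
    obtain ⟨l, hl⟩ := hi'
    exact hdisj k l hl.symm
  have base := hindep.indepFun_finset S T hST hmeas
  have hmem1 : ∀ k, φ k ∈ S := fun k => Finset.mem_image_of_mem _ (Finset.mem_univ k)
  have hmem2 : ∀ k, ψ k ∈ T := fun k => Finset.mem_image_of_mem _ (Finset.mem_univ k)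
  let g1 : ({x // x ∈ S} → Fin C) → ℝ := fun v =>
    ((if a1 = c1 then (1:ℝ) else 0) +
      ∑ k : Fin d, (if v ⟨φ k, hmem1 k⟩ = a1 then (1:ℝ) else 0)) / ((d : ℝ) + 1)
  let g2 : ({x // x ∈ T} → Fin C) → ℝ := fun v =>
    ((if a2 = c2 then (1:ℝ) else 0) +
      ∑ k : Fin d, (if v ⟨ψ k, hmem2 k⟩ = a2 then (1:ℝ) else 0)) / ((d : ℝ) + 1)
  have hg1 : Measurable g1 := by
    apply Measurable.div_const
    apply Measurable.const_add
    apply Finset.measurable_sum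
    intro k _
    have : (fun v : {x // x ∈ S} → Fin C => if v ⟨φ k, hmem1 k⟩ = a1 then (1:ℝ) else 0) =
        (fun x : Fin C => if x = a1 then (1:ℝ) else 0) ∘ (fun v => v ⟨φ k, hmem1 k⟩) := rfl
    rw [this]
    exact Measurable.of_discrete.comp (measurable_pi_apply _)
  have hg2 : Measurable g2 := by
    apply Measurable.div_const
    apply Measurable.const_add
    apply Finset.measurable_sum
    intro k _
    have : (fun v : {x // x ∈ T} → Fin C => if v ⟨ψ k, hmem2 k⟩ = a2 then (1:ℝ) else 0) =
        (fun x : Fin C => if x = a2 then (1:ℝ) else 0) ∘ (fun v => v ⟨ψ k, hmem2 k⟩) := rfl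
    rw [this]
    exact Measurable.of_discrete.comp (measurable_pi_apply _)
  have := base.comp hg1 hg2
  convert this using 1 <;> funext ω <;> rw [aggW_eq_sum] <;> rfl

end Aux2

/-- Theorem 1 of the paper: the expected difference of the post-aggregation similarity
between a node and a same-class node versus a different-class node. -/
theorem expected_similarity_gap
    {Ω : Type*} [MeasurableSpace Ω] (P : Measure Ω) [IsProbabilityMeasure P]
    (C d : ℕ) (hC : 2 ≤ C) (hd : 1 ≤ d) (h : ℝ) (h0 : 0 ≤ h) (h1 : h ≤ 1)
    (c c' : Fin C) (hcc' : c ≠ c') (V U U' : Fin d → Ω → Fin C)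
    (hlawV : ∀ k, HasLawNu P h c (V k)) (hlawU : ∀ k, HasLawNu P h c (U k))
    (hlawU' : ∀ k, HasLawNu P h c' (U' k))
    (hindep : iIndepFun (β := fun _ : Fin d ⊕ Fin d ⊕ Fin d => Fin C)
      (Sum.elim V (Sum.elim U U')) P) :
    (∫ ω, ∑ a, aggW d c V ω a * aggW d c U ω a ∂P) -
        (∫ ω, ∑ a, aggW d c V ω a * aggW d c' U' ω a ∂P) =
      ((((C : ℝ) - 1) * (h * d + 1) - (1 - h) * d) /
          (((C : ℝ) - 1) * ((d : ℝ) + 1))) ^ 2 := by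
  classical
  have hVm : ∀ k, Measurable (V k) := fun k => (hlawV k).1
  have hUm : ∀ k, Measurable (U k) := fun k => (hlawU k).1
  have hU'm : ∀ k, Measurable (U' k) := fun k => (hlawU' k).1
  have hmeas : ∀ i, Measurable (Sum.elim V (Sum.elim U U') i) := by
    rintro (k | k | k)
    · exact hVm k
    · exact hUm k
    · exact hU'm k
  have key1 : ∀ a : Fin C, ∫ ω, aggW d c V ω a * aggW d c U ω a ∂P =
      (∫ ω, aggW d c V ω a ∂P) * (∫ ω, aggW d c U ω a ∂P) := by
    intro a
    have hi : IndepFun (fun ω => aggW d c V ω a) (fun ω => aggW d c U ω a) P :=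
      indepFun_aggW hmeas hindep Sum.inl (Sum.inr ∘ Sum.inl)
        (fun k l => by simp [Function.comp]) c c a a
    exact hi.integral_mul_eq_mul_integral (measurable_aggW hVm a).aestronglyMeasurable
      (measurable_aggW hUm a).aestronglyMeasurable
  have key2 : ∀ a : Fin C, ∫ ω, aggW d c V ω a * aggW d c' U' ω a ∂P =
      (∫ ω, aggW d c V ω a ∂P) * (∫ ω, aggW d c' U' ω a ∂P) := by
    intro a
    have hi : IndepFun (fun ω => aggW d c V ω a) (fun ω => aggW d c' U' ω a) P :=
      indepFun_aggW hmeas hindep Sum.inl (Sum.inr ∘ Sum.inr)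
        (fun k l => by simp [Function.comp]) c c' a a
    exact hi.integral_mul_eq_mul_integral (measurable_aggW hVm a).aestronglyMeasurable
      (measurable_aggW hU'm a).aestronglyMeasurable
  rw [MeasureTheory.integral_finset_sum _ (fun a _ => integrable_mul_aggW P hVm hUm a a),
      MeasureTheory.integral_finset_sum _ (fun a _ => integrable_mul_aggW P hVm hU'm a a)]
  simp only [key1, key2, integral_aggW P h0 h1 hC c hlawV,
    integral_aggW P h0 h1 hC c hlawU, integral_aggW P h0 h1 hC c' hlawU']
  have hC1 : ((C:ℝ) - 1) ≠ 0 := by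
    have : (2:ℝ) ≤ (C:ℝ) := by exact_mod_cast hC
    linarith
  have hd1 : ((d:ℝ) + 1) ≠ 0 := by positivity
  have hc'c : c' ≠ c := fun hh => hcc' hh.symm
  rw [← Finset.sum_sub_distrib]
  have hterm : ∀ a : Fin C,
      ((if a = c then (1:ℝ) else 0) + (d:ℝ) * if a = c then h else (1 - h) / ((C:ℝ) - 1)) / ((d:ℝ) + 1) *
          (((if a = c then (1:ℝ) else 0) + (d:ℝ) * if a = c then h else (1 - h) / ((C:ℝ) - 1)) / ((d:ℝ) + 1)) -
        ((if a = c then (1:ℝ) else 0) + (d:ℝ) * if a = c then h else (1 - h) / ((C:ℝ) - 1)) / ((d:ℝ) + 1) *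
          (((if a = c' then (1:ℝ) else 0) + (d:ℝ) * if a = c' then h else (1 - h) / ((C:ℝ) - 1)) / ((d:ℝ) + 1)) =
      (if a = c then
        ((1 + (d:ℝ)*h)/((d:ℝ)+1) - ((d:ℝ)*((1-h)/((C:ℝ)-1)))/((d:ℝ)+1)) * ((1 + (d:ℝ)*h)/((d:ℝ)+1))
       else 0) -
      (if a = c' then
        ((1 + (d:ℝ)*h)/((d:ℝ)+1) - ((d:ℝ)*((1-h)/((C:ℝ)-1)))/((d:ℝ)+1)) * (((d:ℝ)*((1-h)/((C:ℝ)-1)))/((d:ℝ)+1))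
       else 0) := by
    intro a
    by_cases ha : a = c
    · subst ha
      simp only [if_pos rfl, if_neg hcc', eq_self_iff_true, if_true]
      ring
    · by_cases ha' : a = c'
      · subst ha'
        simp only [if_pos rfl, if_neg hc'c, eq_self_iff_true, if_true]
        ring
      · simp only [if_neg ha, if_neg ha']
        ring
  rw [Finset.sum_congr rfl fun a _ => hterm a, Finset.sum_sub_distrib]
  simp only [Finset.sum_ite_eq', Finset.mem_univ, if_true]
  field_simp
  ring
end

section
/- Let C = 2, let Â ∈ ℝ^{N×N} be row-stochastic, Z ∈ ℝ^{N×2} a one-hot label matrix, and W = ÂZ. For any two nodes v, u in different classes (c_v ≠ c_u), the (v,u)-entry of S(I−Â, Z) = (I−Â)ZZᵀ(I−Â)ᵀ equals W_{v,c_u}·(W_{u,c_u} − 1) + W_{u,c_v}·(W_{v,c_v} − 1), and in particular S(I−Â, Z)_{v,u} ≤ 0. -/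
open scoped BigOperators Matrix

/-- The post-aggregation similarity matrix `S(M, X) = (M X)(M X)ᵀ`. -/
def simMatrix {N F : ℕ} (M : Matrix (Fin N) (Fin N) ℝ)
    (X : Matrix (Fin N) (Fin F) ℝ) : Matrix (Fin N) (Fin N) ℝ :=
  (M * X) * (M * X)ᵀ

theorem simMatrix_highpass_entry_binary_different_class
    {N : ℕ} (A : Matrix (Fin N) (Fin N) ℝ)
    (hA0 : ∀ i j, 0 ≤ A i j) (hA1 : ∀ i, ∑ j, A i j = 1)
    (Z : Matrix (Fin N) (Fin 2) ℝ) (cl : Fin N → Fin 2)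
    (hZ : ∀ v c, Z v c = if c = cl v then 1 else 0)
    (v u : Fin N) (hvu : cl v ≠ cl u) :
    simMatrix (1 - A) Z v u =
        (A * Z) v (cl u) * ((A * Z) u (cl u) - 1) +
          (A * Z) u (cl v) * ((A * Z) v (cl v) - 1) ∧
      simMatrix (1 - A) Z v u ≤ 0 := by
  have hW0 : ∀ i c, 0 ≤ (A * Z) i c := by
    intro i c
    rw [Matrix.mul_apply]
    apply Finset.sum_nonneg
    intro j _
    rw [hZ]
    exact mul_nonneg (hA0 i j) (by split <;> norm_num)
  have hW1 : ∀ i c, (A * Z) i c ≤ 1 := by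
    intro i c
    rw [Matrix.mul_apply]
    calc ∑ j, A i j * Z j c ≤ ∑ j, A i j := by
          apply Finset.sum_le_sum
          intro j _
          rw [hZ]
          split
          · simp
          · simp [hA0 i j]
      _ = 1 := hA1 i
  have key : simMatrix (1 - A) Z v u =
      (A * Z) v (cl u) * ((A * Z) u (cl u) - 1) +
        (A * Z) u (cl v) * ((A * Z) v (cl v) - 1) := by
    have hexp : simMatrix (1 - A) Z v u =
        ∑ c, (Z v c - (A * Z) v c) * (Z u c - (A * Z) u c) := by
      simp [simMatrix, Matrix.sub_mul, Matrix.mul_apply, Matrix.transpose_apply,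
        Matrix.sub_apply, mul_comm]
    rw [hexp, Fin.sum_univ_two]
    have h2 : (cl v = 0 ∧ cl u = 1) ∨ (cl v = 1 ∧ cl u = 0) := by omega
    rcases h2 with ⟨h1, h2⟩ | ⟨h1, h2⟩ <;> simp [hZ, h1, h2] <;> ring
  refine ⟨key, ?_⟩
  rw [key]
  nlinarith [hW0 v (cl u), hW0 u (cl v), hW1 u (cl u), hW1 v (cl v)]
end

section
/- (Theorem 2.) Let C = 2, let Â ∈ ℝ^{N×N} be row-stochastic, and let Z ∈ ℝ^{N×2} be a one-hot label matrix. Then every node v is diversification distinguishable with respect to S(I−Â, Z): (1) if the set {u : c_u = c_v} is nonempty, then the mean of S(I−Â, Z)_{v,u} over u with c_u = c_v is ≥ 0; and (2) if the set {u : c_u ≠ c_v} is nonempty, then the mean of S(I−Â, Z)_{v,u} over u with c_u ≠ c_v is ≤ 0. Consequently the graph diversification distinguishability value DD_{Â,Z}(𝒢), the fraction of diversification distinguishable nodes, equals 1. -/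
open scoped BigOperators Matrix Classical

/-- A node `v` is diversification distinguishable w.r.t. a similarity matrix `S`:
the mean of `S v u` over same-class nodes `u` is `≥ 0` and the mean over
different-class nodes `u` is `≤ 0`. -/
def DivDistinguishable {N C : ℕ} (S : Matrix (Fin N) (Fin N) ℝ)
    (cl : Fin N → Fin C) (v : Fin N) : Prop :=
  ((Finset.univ.filter fun u => cl u = cl v).Nonempty →
    0 ≤ (∑ u ∈ Finset.univ.filter (fun u => cl u = cl v), S v u) /
        ((Finset.univ.filter fun u => cl u = cl v).card : ℝ)) ∧
  ((Finset.univ.filter fun u => cl u ≠ cl v).Nonempty →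
    (∑ u ∈ Finset.univ.filter (fun u => cl u ≠ cl v), S v u) /
        ((Finset.univ.filter fun u => cl u ≠ cl v).card : ℝ) ≤ 0)

section aux
variable {N : ℕ} (A : Matrix (Fin N) (Fin N) ℝ)
  (Z : Matrix (Fin N) (Fin 2) ℝ) (cl : Fin N → Fin 2)

lemma entry_eq (hZ : ∀ v c, Z v c = if c = cl v then 1 else 0) (v : Fin N) (c : Fin 2) :
    (((1 - A) * Z : Matrix (Fin N) (Fin 2) ℝ)) v c =
      (if c = cl v then 1 else 0) - ∑ j ∈ Finset.univ.filter (fun j => cl j = c), A v j := by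
  rw [Matrix.mul_apply]
  have : ∀ j, (1 - A) v j * Z j c
      = (if v = j then 1 else 0) * Z j c - A v j * Z j c := by
    intro j
    simp [Matrix.sub_apply, Matrix.one_apply, sub_mul]
  rw [Finset.sum_congr rfl (fun j _ => this j), Finset.sum_sub_distrib]
  congr 1
  · have h2 : ∀ j, (if v = j then (1:ℝ) else 0) * Z j c = if v = j then Z j c else 0 := by
      intro j; split <;> simp
    rw [Finset.sum_congr rfl fun j _ => h2 j, Finset.sum_ite_eq]
    simp [hZ]
  · rw [Finset.sum_filter]
    refine Finset.sum_congr rfl fun j _ => ?_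
    rw [hZ]
    by_cases h : cl j = c
    · rw [if_pos h.symm, mul_one, if_pos h]
    · rw [if_neg (fun hc => h hc.symm), mul_zero, if_neg h]

lemma entry_eq' (hA0 : ∀ i j, 0 ≤ A i j) (hA1 : ∀ i, ∑ j, A i j = 1)
    (hZ : ∀ v c, Z v c = if c = cl v then 1 else 0) (v : Fin N) (c : Fin 2) :
    (((1 - A) * Z : Matrix (Fin N) (Fin 2) ℝ)) v c =
      (if c = cl v then (1:ℝ) else -1) *
        (1 - ∑ j ∈ Finset.univ.filter (fun j => cl j = cl v), A v j) := by
  rw [entry_eq A Z cl hZ]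
  by_cases h : c = cl v
  · simp [h]
  · have hpart : (∑ j ∈ Finset.univ.filter (fun j => cl j = cl v), A v j)
        + ∑ j ∈ Finset.univ.filter (fun j => ¬ cl j = cl v), A v j = 1 := by
      rw [Finset.sum_filter_add_sum_filter_not]
      exact hA1 v
    have hfe : (Finset.univ.filter (fun j => cl j = c))
        = Finset.univ.filter (fun j => ¬ cl j = cl v) := by
      refine Finset.filter_congr fun j _ => ?_
      constructor
      · intro hj; rw [hj]; exact h
      · intro hj; omega
    rw [hfe, if_neg h, if_neg h]
    linarith
end aux


/-- Theorem 2: for binary classification (`C = 2`) with a row-stochastic aggregation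
operator, every node is diversification distinguishable, so `DD = 1`. -/
theorem binary_diversification_distinguishability
    {N : ℕ} (hN : 0 < N) (A : Matrix (Fin N) (Fin N) ℝ)
    (hA0 : ∀ i j, 0 ≤ A i j) (hA1 : ∀ i, ∑ j, A i j = 1)
    (Z : Matrix (Fin N) (Fin 2) ℝ) (cl : Fin N → Fin 2)
    (hZ : ∀ v c, Z v c = if c = cl v then 1 else 0) :
    (∀ v : Fin N, DivDistinguishable (simMatrix (1 - A) Z) cl v) ∧
      ((Finset.univ.filter fun v : Fin N =>
          DivDistinguishable (simMatrix (1 - A) Z) cl v).card : ℝ) / (N : ℝ) = 1 := by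

  set t : Fin N → ℝ := fun v => ∑ j ∈ Finset.univ.filter (fun j => cl j = cl v), A v j with ht
  have htle : ∀ v, t v ≤ 1 := by
    intro v
    rw [ht]
    calc (∑ j ∈ Finset.univ.filter (fun j => cl j = cl v), A v j)
        ≤ ∑ j, A v j := Finset.sum_le_sum_of_subset_of_nonneg (Finset.filter_subset _ _)
          (fun j _ _ => hA0 v j)
      _ = 1 := hA1 v
  have hS : ∀ v u, simMatrix (1 - A) Z v u
      = (if cl u = cl v then (2:ℝ) else -2) * ((1 - t v) * (1 - t u)) := by
    intro v u
    have hv := entry_eq' A Z cl hA0 hA1 hZ v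
    have hu := entry_eq' A Z cl hA0 hA1 hZ u
    have : simMatrix (1 - A) Z v u = ∑ c : Fin 2, (((1-A)*Z : Matrix (Fin N) (Fin 2) ℝ)) v c * (((1-A)*Z : Matrix (Fin N) (Fin 2) ℝ)) u c := by
      simp [simMatrix, Matrix.mul_apply, Matrix.transpose_apply, Matrix.one_apply, mul_comm, eq_comm]
    rw [this, Fin.sum_univ_two, hv 0, hv 1, hu 0, hu 1]
    have h2 : ∀ x : Fin 2, x = 0 ∨ x = 1 := by omega
    rcases h2 (cl v) with hcv | hcv <;> rcases h2 (cl u) with hcu | hcu <;>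
      simp [hcv, hcu, ht] <;> ring
  have hall : ∀ v : Fin N, DivDistinguishable (simMatrix (1 - A) Z) cl v := by
    intro v
    constructor
    · intro hne
      apply div_nonneg _ (Nat.cast_nonneg _)
      apply Finset.sum_nonneg
      intro u hu
      rw [Finset.mem_filter] at hu
      rw [hS v u, if_pos hu.2]
      have := htle v; have := htle u
      nlinarith
    · intro hne
      apply div_nonpos_of_nonpos_of_nonneg _ (Nat.cast_nonneg _)
      apply Finset.sum_nonpos
      intro u hu
      rw [Finset.mem_filter] at hu
      rw [hS v u, if_neg hu.2]
      have := htle v; have := htle u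
      nlinarith
  refine ⟨hall, ?_⟩
  rw [Finset.filter_true_of_mem (fun v _ => hall v)]
  simp only [Finset.card_univ, Fintype.card_fin]
  exact div_self (by positivity)
end
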